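/- Let M be an n×n k-uniform binary matrix and fix j with 1 ≤ j ≤ n−1. Then there exists an assignment mapping φ_j for M satisfying Conditions (1) and (2) if and only if for every integer v, the number of indices i ∈ X_{0,1}^j with S_{i,j} ≥ v is at most the number of indices i ∈ X_{1,0}^j with S_{i,j} ≥ v (this counting condition is equivalent to the canonical word w_j being a Dyck word). -/

import Mathlib

lemma exists_bijOn_of_counts {α : Type*} [DecidableEq α] (w : α → ℤ) :
    ∀ N (P Q : Finset α), Q.card = N → P.card = Q.card →
    (∀ v : ℤ, (Q.filter (fun q => v ≤ w q)).card ≤ (P.filter (fun p => v ≤ w p)).card) →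
    ∃ e : α → α, Set.BijOn e ↑P ↑Q ∧ ∀ p ∈ P, w (e p) ≤ w p := by
  intro N
  induction N with
  | zero =>
    intro P Q hQ hPQ _
    rw [Finset.card_eq_zero] at hQ
    subst hQ
    simp only [Finset.card_empty, Finset.card_eq_zero] at hPQ
    subst hPQ
    exact ⟨id, by simp [Set.bijOn_empty], by simp⟩
  | succ N ih =>
    intro P Q hQ hPQ hcount
    have hQne : Q.Nonempty := Finset.card_pos.mp (by omega)
    obtain ⟨q, hqQ, hqmax⟩ := Finset.exists_max_image Q w hQne
    have h1 : 0 < (Q.filter (fun q' => w q ≤ w q')).card :=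
      Finset.card_pos.mpr ⟨q, Finset.mem_filter.mpr ⟨hqQ, le_refl _⟩⟩
    have h2 := hcount (w q)
    obtain ⟨p, hpmem⟩ := Finset.card_pos.mp (lt_of_lt_of_le h1 h2)
    rw [Finset.mem_filter] at hpmem
    obtain ⟨hpP, hwp⟩ := hpmem
    have hcount' : ∀ v : ℤ, ((Q.erase q).filter (fun q' => v ≤ w q')).card ≤
        ((P.erase p).filter (fun p' => v ≤ w p')).card := by
      intro v
      rw [Finset.filter_erase, Finset.filter_erase]
      by_cases hv : v ≤ w q
      · have hq' : q ∈ Q.filter (fun q' => v ≤ w q') := Finset.mem_filter.mpr ⟨hqQ, hv⟩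
        have hp' : p ∈ P.filter (fun p' => v ≤ w p') :=
          Finset.mem_filter.mpr ⟨hpP, le_trans hv hwp⟩
        rw [Finset.card_erase_of_mem hq', Finset.card_erase_of_mem hp']
        exact Nat.sub_le_sub_right (hcount v) 1
      · have : Q.filter (fun q' => v ≤ w q') = ∅ := by
          apply Finset.filter_false_of_mem
          intro x hx hle
          exact hv (le_trans hle (hqmax x hx))
        rw [this]
        simp
    obtain ⟨e', he'bij, he'w⟩ := ih (P.erase p) (Q.erase q)
      (by rw [Finset.card_erase_of_mem hqQ, hQ]; rfl)
      (by rw [Finset.card_erase_of_mem hqQ, Finset.card_erase_of_mem hpP, hPQ]) hcount'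
    refine ⟨fun x => if x = p then q else e' x, ?_, ?_⟩
    · have hbij2 : Set.BijOn (fun x => if x = p then q else e' x) ↑(P.erase p) ↑(Q.erase q) := by
        apply he'bij.congr
        intro x hx
        simp only [Finset.coe_erase, Set.mem_diff, Set.mem_singleton_iff] at hx
        simp [hx.2]
      have hq_not : q ∉ (↑(Q.erase q) : Set α) := by simp
      have := hbij2.insert (a := p) (by simpa using hq_not)
      simp only [eq_self_iff_true, if_true] at this
      rwa [← Finset.coe_insert, ← Finset.coe_insert, Finset.insert_erase hpP,
        Finset.insert_erase hqQ] at this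
    · intro x hx
      by_cases hxp : x = p
      · subst hxp; simpa [hwp]
      · simp only [if_neg hxp]
        exact he'w x (Finset.mem_erase.mpr ⟨hxp, hx⟩)


/-- `M` is a binary (0/1) matrix. -/
def IsBinary {n : ℕ} (M : Fin n → Fin n → ℕ) : Prop :=
  ∀ i j, M i j = 0 ∨ M i j = 1

/-- Every row and every column of `M` contains exactly `k` entries equal to `1`. -/
def IsUniform {n : ℕ} (k : ℕ) (M : Fin n → Fin n → ℕ) : Prop :=
  (∀ i, (Finset.univ.filter fun j => M i j = 1).card = k) ∧
  (∀ j, (Finset.univ.filter fun i => M i j = 1).card = k)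

/-- Partial row sum `S_{i,j}`: sum of the entries of row `i` in columns `≤ j`. -/
def RowSum {n : ℕ} (M : Fin n → Fin n → ℕ) (i j : Fin n) : ℕ :=
  ∑ l ∈ Finset.Iic j, M i l

/-- An assignment mapping between columns `j` and `j'`: a bijection from
`{i : M i j = 1}` onto `{i : M i j' = 1}`. -/
def IsAssignment {n : ℕ} (M : Fin n → Fin n → ℕ) (j j' : Fin n) (φ : Fin n → Fin n) : Prop :=
  Set.BijOn φ {i | M i j = 1} {i | M i j' = 1}

/-- Condition (2): `S_{φ(i),j} ≤ S_{i,j}` for all `i` in the domain. -/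
def Cond2 {n : ℕ} (M : Fin n → Fin n → ℕ) (j : Fin n) (φ : Fin n → Fin n) : Prop :=
  ∀ i, M i j = 1 → RowSum M (φ i) j ≤ RowSum M i j

/-- Condition (1): `φ(i) = i` exactly when `m_{i,j} = m_{i,j'} = 1`. -/
def Cond1 {n : ℕ} (M : Fin n → Fin n → ℕ) (j j' : Fin n) (φ : Fin n → Fin n) : Prop :=
  ∀ i, M i j = 1 → (φ i = i ↔ (M i j = 1 ∧ M i j' = 1))

/-- `M` is optimal: it is `k`-uniform for some `k`, and between each pair of consecutive
columns there is an assignment mapping satisfying Condition (2). -/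
def Optimal {n : ℕ} (M : Fin n → Fin n → ℕ) : Prop :=
  (∃ k, IsUniform k M) ∧
  ∀ j : ℕ, ∀ hj : j + 1 < n, ∃ φ : Fin n → Fin n,
    IsAssignment M ⟨j, Nat.lt_of_succ_lt hj⟩ ⟨j + 1, hj⟩ φ ∧
    Cond2 M ⟨j, Nat.lt_of_succ_lt hj⟩ φ

/-- For a `k`-uniform binary matrix and a fixed pair of consecutive
columns, an assignment mapping satisfying Conditions (1) and (2) exists if and only if
for every integer `v` the number of rows `i ∈ X₀₁` with `S_{i,j} ≥ v` is at most the
number of rows `i ∈ X₁₀` with `S_{i,j} ≥ v`. -/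
theorem stmt_2 {n k : ℕ} (M : Fin n → Fin n → ℕ)
    (hbin : IsBinary M) (hunif : IsUniform k M) (j : ℕ) (hj : j + 1 < n) :
    (∃ φ : Fin n → Fin n,
      IsAssignment M ⟨j, Nat.lt_of_succ_lt hj⟩ ⟨j + 1, hj⟩ φ ∧
      Cond1 M ⟨j, Nat.lt_of_succ_lt hj⟩ ⟨j + 1, hj⟩ φ ∧
      Cond2 M ⟨j, Nat.lt_of_succ_lt hj⟩ φ) ↔
    ∀ v : ℤ,
      (Finset.univ.filter fun i : Fin n =>
          M i ⟨j, Nat.lt_of_succ_lt hj⟩ = 0 ∧ M i ⟨j + 1, hj⟩ = 1 ∧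
          v ≤ (RowSum M i ⟨j, Nat.lt_of_succ_lt hj⟩ : ℤ)).card ≤
      (Finset.univ.filter fun i : Fin n =>
          M i ⟨j, Nat.lt_of_succ_lt hj⟩ = 1 ∧ M i ⟨j + 1, hj⟩ = 0 ∧
          v ≤ (RowSum M i ⟨j, Nat.lt_of_succ_lt hj⟩ : ℤ)).card := by
  set c : Fin n := ⟨j, Nat.lt_of_succ_lt hj⟩ with hc
  set c' : Fin n := ⟨j + 1, hj⟩ with hc'
  have : Nonempty (Fin n) := ⟨c⟩
  set w : Fin n → ℤ := fun i => (RowSum M i c : ℤ) with hw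
  constructor
  · rintro ⟨φ, hasg, h1, h2⟩ v
    set g := Function.invFunOn φ {i | M i c = 1} with hg
    have hinv := hasg.invOn_invFunOn
    have hmt : Set.MapsTo g {i | M i c' = 1} {i | M i c = 1} :=
      hasg.surjOn.mapsTo_invFunOn
    apply Finset.card_le_card_of_injOn g
    · intro a ha
      simp only [Finset.mem_coe, Finset.mem_filter, Finset.mem_univ, true_and] at ha ⊢
      obtain ⟨ha0, ha1, hav⟩ := ha
      have hga : M (g a) c = 1 := hmt ha1
      have hφga : φ (g a) = a := hinv.2 ha1
      have hga' : M (g a) c' ≠ 1 := by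
        intro hcontra
        have := (h1 (g a) hga).mpr ⟨hga, hcontra⟩
        rw [this] at hφga
        rw [hφga] at hga
        omega
      have hga'0 : M (g a) c' = 0 := by rcases hbin (g a) c' with h | h; exact h; exact absurd h hga'
      refine ⟨hga, hga'0, ?_⟩
      have := h2 (g a) hga
      rw [hφga] at this
      exact le_trans hav (by exact_mod_cast this)
    · intro a ha b hb hab
      simp only [Finset.coe_filter, Set.mem_setOf_eq] at ha hb
      have : φ (g a) = φ (g b) := by rw [hab]
      rwa [hinv.2 ha.2.2.1, hinv.2 hb.2.2.1] at this
  · intro hcount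
    classical
    set P : Finset (Fin n) := Finset.univ.filter (fun i => M i c = 1 ∧ M i c' = 0) with hP
    set Q : Finset (Fin n) := Finset.univ.filter (fun i => M i c = 0 ∧ M i c' = 1) with hQ
    have hcardPQ : P.card = Q.card := by
      have hA : (Finset.univ.filter fun i => M i c = 1).card = k := hunif.2 c
      have hB : (Finset.univ.filter fun i => M i c' = 1).card = k := hunif.2 c'
      have hPeq : P = (Finset.univ.filter fun i => M i c = 1) \
          (Finset.univ.filter fun i => M i c' = 1) := by
        ext i
        simp only [hP, Finset.mem_filter, Finset.mem_sdiff, Finset.mem_univ, true_and]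
        constructor
        · rintro ⟨h1, h0⟩; exact ⟨h1, by omega⟩
        · rintro ⟨h1, h0⟩
          refine ⟨h1, ?_⟩
          rcases hbin i c' with h | h
          · exact h
          · exact absurd h h0
      have hQeq : Q = (Finset.univ.filter fun i => M i c' = 1) \
          (Finset.univ.filter fun i => M i c = 1) := by
        ext i
        simp only [hQ, Finset.mem_filter, Finset.mem_sdiff, Finset.mem_univ, true_and]
        constructor
        · rintro ⟨h0, h1⟩; exact ⟨h1, by omega⟩
        · rintro ⟨h1, h0⟩
          refine ⟨?_, h1⟩
          rcases hbin i c with h | h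
          · exact h
          · exact absurd h h0
      have e1 := Finset.card_inter_add_card_sdiff (Finset.univ.filter fun i => M i c = 1)
        (Finset.univ.filter fun i => M i c' = 1)
      have e2 := Finset.card_inter_add_card_sdiff (Finset.univ.filter fun i => M i c' = 1)
        (Finset.univ.filter fun i => M i c = 1)
      rw [Finset.inter_comm] at e2
      rw [hPeq, hQeq]
      omega
    have hcount' : ∀ v : ℤ, (Q.filter (fun q => v ≤ w q)).card ≤
        (P.filter (fun p => v ≤ w p)).card := by
      intro v
      have := hcount v
      simpa [hP, hQ, Finset.filter_filter, and_assoc] using this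
    obtain ⟨e, hebij, hew⟩ := exists_bijOn_of_counts w Q.card P Q rfl hcardPQ hcount'
    refine ⟨fun i => if M i c' = 1 then i else e i, ?_, ?_, ?_⟩
    · refine ⟨?_, ?_, ?_⟩
      · intro i hi
        simp only [Set.mem_setOf_eq] at hi ⊢
        by_cases h : M i c' = 1
        · simp [h]
        · have h0 : M i c' = 0 := by rcases hbin i c' with h' | h'; exact h'; exact absurd h' h
          have hiP : i ∈ P := Finset.mem_filter.mpr ⟨Finset.mem_univ _, hi, h0⟩
          have := hebij.mapsTo (Finset.mem_coe.mpr hiP)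
          simp only [Finset.mem_coe, hQ, Finset.mem_filter] at this
          simp only [if_neg h]
          exact this.2.2
      · intro x hx y hy hxy
        simp only [Set.mem_setOf_eq] at hx hy
        by_cases hx' : M x c' = 1 <;> by_cases hy' : M y c' = 1
        · simpa [hx', hy'] using hxy
        · exfalso
          have hy0 : M y c' = 0 := by rcases hbin y c' with h' | h'; exact h'; exact absurd h' hy'
          have hyP : y ∈ P := Finset.mem_filter.mpr ⟨Finset.mem_univ _, hy, hy0⟩
          have heyQ := hebij.mapsTo (Finset.mem_coe.mpr hyP)
          simp only [Finset.mem_coe, hQ, Finset.mem_filter] at heyQ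
          simp only [if_pos hx', if_neg hy'] at hxy
          rw [hxy] at hx
          omega
        · exfalso
          have hx0 : M x c' = 0 := by rcases hbin x c' with h' | h'; exact h'; exact absurd h' hx'
          have hxP : x ∈ P := Finset.mem_filter.mpr ⟨Finset.mem_univ _, hx, hx0⟩
          have hexQ := hebij.mapsTo (Finset.mem_coe.mpr hxP)
          simp only [Finset.mem_coe, hQ, Finset.mem_filter] at hexQ
          simp only [if_neg hx', if_pos hy'] at hxy
          rw [← hxy] at hy
          omega
        · have hx0 : M x c' = 0 := by rcases hbin x c' with h' | h'; exact h'; exact absurd h' hx'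
          have hy0 : M y c' = 0 := by rcases hbin y c' with h' | h'; exact h'; exact absurd h' hy'
          have hxP : x ∈ P := Finset.mem_filter.mpr ⟨Finset.mem_univ _, hx, hx0⟩
          have hyP : y ∈ P := Finset.mem_filter.mpr ⟨Finset.mem_univ _, hy, hy0⟩
          simp only [if_neg hx', if_neg hy'] at hxy
          exact hebij.injOn (Finset.mem_coe.mpr hxP) (Finset.mem_coe.mpr hyP) hxy
      · intro b hb
        simp only [Set.mem_setOf_eq] at hb
        by_cases h : M b c = 1
        · exact ⟨b, h, by simp [hb]⟩
        · have h0 : M b c = 0 := by rcases hbin b c with h' | h'; exact h'; exact absurd h' h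
          have hbQ : b ∈ Q := Finset.mem_filter.mpr ⟨Finset.mem_univ _, h0, hb⟩
          obtain ⟨p, hpP, hpe⟩ := hebij.surjOn (Finset.mem_coe.mpr hbQ)
          simp only [Finset.mem_coe, hP, Finset.mem_filter] at hpP
          refine ⟨p, hpP.2.1, ?_⟩
          simp only [Set.mem_setOf_eq]
          rw [if_neg (by omega)]
          exact hpe
    · intro i hi
      by_cases h : M i c' = 1
      · simp [h, hi]
      · have h0 : M i c' = 0 := by rcases hbin i c' with h' | h'; exact h'; exact absurd h' h
        have hiP : i ∈ P := Finset.mem_filter.mpr ⟨Finset.mem_univ _, hi, h0⟩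
        have heiQ := hebij.mapsTo (Finset.mem_coe.mpr hiP)
        simp only [Finset.mem_coe, hQ, Finset.mem_filter] at heiQ
        simp only [if_neg h]
        constructor
        · intro hei
          rw [hei] at heiQ
          omega
        · rintro ⟨_, h1⟩
          omega
    · intro i hi
      by_cases h : M i c' = 1
      · simp [h]
      · have h0 : M i c' = 0 := by rcases hbin i c' with h' | h'; exact h'; exact absurd h' h
        have hiP : i ∈ P := Finset.mem_filter.mpr ⟨Finset.mem_univ _, hi, h0⟩
        have := hew i hiP
        simp only [hw] at this
        simp only [if_neg h]
        exact_mod_cast this
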